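/- In the change-point factor model with white-noise orthogonality, assume the entrywise moment bound E[(x_{t,i})_j⁴] ≤ σ_x⁴ for all t, i, j, and the loading norm bounds ‖A_i‖₂ ≤ a1 p^{(1−δ_i)/2} (i = 1,2). Let h ≥ 1 be an integer, ε ∈ (−γ0, 1−γ0) with εn an integer and |ε| > (h+1)/n, and k_max = max(k1,k2). Then: if ε < 0, ‖Σ_{y,1}(h, γ0+ε)‖₂ ≤ γ0 a1² k_max σ_x² p^{1−δ1} and ‖Σ_{y,2}(h, γ0+ε)‖₂ ≤ a1² k_max σ_x² ( −ε p^{1−δ1} + (h/n) p^{1−δ1/2−δ2/2} + (1−γ0) p^{1−δ2} ); and if ε > 0, ‖Σ_{y,1}(h, γ0+ε)‖₂ ≤ a1² k_max σ_x² ( γ0 p^{1−δ1} + (h/n) p^{1−δ1/2−δ2/2} + ε p^{1−δ2} ) and ‖Σ_{y,2}(h, γ0+ε)‖₂ ≤ (1−γ0) a1² k_max σ_x² p^{1−δ2}. -/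

import Mathlib

open Matrix MeasureTheory Finset

/-- Entrywise expectation of the outer product `E[u vᵀ]`. -/
noncomputable def outerE {Ω : Type} [MeasurableSpace Ω] (μ : Measure Ω) {a b : ℕ}
    (u : Ω → Fin a → ℝ) (v : Ω → Fin b → ℝ) : Matrix (Fin a) (Fin b) ℝ :=
  Matrix.of fun i j => ∫ ω, u ω i * v ω j ∂μ

/-- `Σ_{y,1}(h,γ) = (1/n)·Σ_{t=1}^{r−h} E[y_t y_{t+h}ᵀ]` where `r = ⌊γn⌋`. -/
noncomputable def SigY1 {Ω : Type} [MeasurableSpace Ω] (μ : Measure Ω) {p : ℕ}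
    (y : ℕ → Ω → Fin p → ℝ) (n h r : ℕ) : Matrix (Fin p) (Fin p) ℝ :=
  (n : ℝ)⁻¹ • ∑ t ∈ Finset.Icc 1 (r - h), outerE μ (y t) (y (t + h))

/-- `Σ_{y,2}(h,γ) = (1/n)·Σ_{t=r+1}^{n−h} E[y_t y_{t+h}ᵀ]` where `r = ⌊γn⌋`. -/
noncomputable def SigY2 {Ω : Type} [MeasurableSpace Ω] (μ : Measure Ω) {p : ℕ}
    (y : ℕ → Ω → Fin p → ℝ) (n h r : ℕ) : Matrix (Fin p) (Fin p) ℝ :=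
  (n : ℝ)⁻¹ • ∑ t ∈ Finset.Icc (r + 1) (n - h), outerE μ (y t) (y (t + h))

/-- Spectral norm (largest singular value) of a real matrix. -/
noncomputable def spec {m n : ℕ} (A : Matrix (Fin m) (Fin n) ℝ) : ℝ :=
  ‖LinearMap.toContinuousLinearMap (Matrix.toEuclideanLin A)‖

open scoped Matrix.Norms.L2Operator

section SpecLemmas

lemma spec_eq_norm {m n : ℕ} (A : Matrix (Fin m) (Fin n) ℝ) : spec A = ‖A‖ := rfl

lemma spec_nonneg {m n : ℕ} (A : Matrix (Fin m) (Fin n) ℝ) : 0 ≤ spec A := norm_nonneg _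

lemma spec_mul_le {m n l : ℕ} (A : Matrix (Fin m) (Fin n) ℝ) (B : Matrix (Fin n) (Fin l) ℝ) :
    spec (A * B) ≤ spec A * spec B := Matrix.l2_opNorm_mul A B

lemma spec_transpose {m n : ℕ} (A : Matrix (Fin m) (Fin n) ℝ) : spec Aᵀ = spec A := by
  have h : Aᵀ = Aᴴ := by ext i j; simp [conjTranspose_apply]
  rw [spec_eq_norm, spec_eq_norm, h, Matrix.l2_opNorm_conjTranspose]

lemma spec_sum_le {ι : Type*} (s : Finset ι) {m n : ℕ} (M : ι → Matrix (Fin m) (Fin n) ℝ) :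
    spec (∑ t ∈ s, M t) ≤ ∑ t ∈ s, spec (M t) := by
  simp only [spec_eq_norm]; exact norm_sum_le s M

lemma spec_smul {m n : ℕ} (c : ℝ) (A : Matrix (Fin m) (Fin n) ℝ) :
    spec (c • A) = |c| * spec A := by
  simp only [spec_eq_norm]; rw [norm_smul, Real.norm_eq_abs]

lemma spec_le_of_entries {a b : ℕ} (M : Matrix (Fin a) (Fin b) ℝ) (c : ℝ) (hc : 0 ≤ c)
    (hM : ∀ i j, |M i j| ≤ c) : spec M ≤ Real.sqrt (a * b) * c := by
  refine ContinuousLinearMap.opNorm_le_bound _ (by positivity) fun x => ?_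
  rw [LinearMap.coe_toContinuousLinearMap']
  rw [Matrix.toEuclideanLin_apply]
  rw [EuclideanSpace.norm_eq]
  have hxn : ‖x‖ = Real.sqrt (∑ j, (x j)^2) := by
    rw [EuclideanSpace.norm_eq]; congr 1; exact Finset.sum_congr rfl fun j _ => by
      rw [Real.norm_eq_abs, sq_abs]
  have key : ∀ i, (M.mulVec ((WithLp.equiv 2 (Fin b → ℝ)) x) i)^2 ≤ (b * c^2) * ∑ j, (x j)^2 := by
    intro i
    have hmv : M.mulVec ((WithLp.equiv 2 (Fin b → ℝ)) x) i = ∑ j, M i j * x j := by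
      simp [Matrix.mulVec, dotProduct]
    rw [hmv]
    calc (∑ j, M i j * x j)^2 ≤ (∑ j, (M i j)^2) * ∑ j, (x j)^2 :=
          Finset.sum_mul_sq_le_sq_mul_sq _ _ _
      _ ≤ (b * c^2) * ∑ j, (x j)^2 := by
          apply mul_le_mul_of_nonneg_right _ (by positivity)
          calc ∑ j, (M i j)^2 ≤ ∑ _j : Fin b, c^2 := Finset.sum_le_sum fun j _ => by
                have := hM i j
                exact sq_le_sq' (neg_le_of_abs_le this) (le_of_abs_le this)
            _ = b * c^2 := by simp [Finset.sum_const, mul_comm]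
  calc Real.sqrt (∑ i, ‖M.mulVec ((WithLp.equiv 2 (Fin b → ℝ)) x) i‖^2)
      ≤ Real.sqrt (∑ _i : Fin a, (b * c^2) * ∑ j, (x j)^2) := by
        apply Real.sqrt_le_sqrt; apply Finset.sum_le_sum; intro i _
        rw [Real.norm_eq_abs, sq_abs]; exact key i
    _ = Real.sqrt ((a * b) * c^2 * ∑ j, (x j)^2) := by
        rw [Finset.sum_const]; congr 1; simp; ring
    _ ≤ Real.sqrt (a*b) * c * ‖x‖ := by
        rw [hxn, Real.sqrt_mul (by positivity), Real.sqrt_mul (by positivity), Real.sqrt_sq hc]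
        try ring_nf

end SpecLemmas

section IntLemmas

variable {Ω : Type} [MeasurableSpace Ω] {μ : Measure Ω}

lemma int_mul {f g : Ω → ℝ} (hf : MemLp f 2 μ) (hg : MemLp g 2 μ) :
    Integrable (fun ω => f ω * g ω) μ := by
  have h := memLp_one_iff_integrable.mp (MemLp.smul (p := 2) (q := 2) (r := 1) hg hf
    (hpqr := ⟨by rw [inv_one]; exact ENNReal.inv_two_add_inv_two⟩))
  simpa [smul_eq_mul, Pi.mul_def] using h

lemma memL2_of_L4 [IsProbabilityMeasure μ] {f : Ω → ℝ} (hf : MemLp f 4 μ) : MemLp f 2 μ :=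
  hf.mono_exponent (by norm_num)

lemma memL2_sq {f : Ω → ℝ} (hf : MemLp f 4 μ) : MemLp (fun ω => f ω ^ 2) 2 μ := by
  have h := MemLp.smul (p := 4) (q := 4) (r := 2) hf hf
    (hpqr := ⟨by rw [← one_div, ← one_div, ENNReal.div_add_div_same, ENNReal.div_eq_div_iff] <;> norm_num⟩)
  simpa [smul_eq_mul, pow_two, Pi.mul_def] using h

lemma int_p4 {f : Ω → ℝ} (hf : MemLp f 4 μ) : Integrable (fun ω => f ω ^ 4) μ := by
  have h := int_mul (memL2_sq hf) (memL2_sq hf)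
  simpa [← pow_add] using h

lemma abs_integral_mul_le [IsProbabilityMeasure μ] {f g : Ω → ℝ}
    (hf4 : MemLp f 4 μ) (hg4 : MemLp g 4 μ) {σ : ℝ} (hσ : 0 < σ)
    (hf : ∫ ω, f ω ^ 4 ∂μ ≤ σ ^ 4) (hg : ∫ ω, g ω ^ 4 ∂μ ≤ σ ^ 4) :
    |∫ ω, f ω * g ω ∂μ| ≤ σ ^ 2 := by
  have hint : Integrable (fun ω => f ω * g ω) μ := int_mul (memL2_of_L4 hf4) (memL2_of_L4 hg4)
  have h1 : |∫ ω, f ω * g ω ∂μ| ≤ ∫ ω, |f ω| * |g ω| ∂μ := by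
    simpa [Real.norm_eq_abs, abs_mul] using
      norm_integral_le_integral_norm (μ := μ) (fun ω => f ω * g ω)
  have hia : Integrable (fun ω => |f ω| * |g ω|) μ := by
    simpa [abs_mul] using hint.abs
  have hb : Integrable (fun ω => f ω ^ 4 / (4 * σ^2) + g ω ^ 4 / (4 * σ^2)) μ :=
    ((int_p4 hf4).div_const _).add ((int_p4 hg4).div_const _)
  have hintR : Integrable (fun ω => f ω ^ 4 / (4 * σ^2) + g ω ^ 4 / (4 * σ^2) + σ^2/2) μ :=
    hb.add (integrable_const _)
  have h4 : (0:ℝ) < 4 * σ^2 := by positivity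
  have h2 : ∫ ω, |f ω| * |g ω| ∂μ ≤
      ∫ ω, (f ω ^ 4 / (4 * σ^2) + g ω ^ 4 / (4 * σ^2) + σ^2/2) ∂μ := by
    apply integral_mono hia hintR
    intro ω
    dsimp only
    have key : 4*σ^2*(|f ω| * |g ω|) ≤ f ω^4 + g ω^4 + 2*(σ^2*σ^2) := by
      nlinarith [sq_nonneg (|f ω| - |g ω|), sq_abs (f ω), sq_abs (g ω),
        abs_nonneg (f ω), abs_nonneg (g ω), sq_nonneg (f ω^2 - σ^2), sq_nonneg (g ω^2 - σ^2),
        sq_nonneg σ, mul_nonneg (abs_nonneg (f ω)) (abs_nonneg (g ω))]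
    have heq : f ω^4/(4*σ^2) + g ω^4/(4*σ^2) + σ^2/2 =
        (f ω^4 + g ω^4 + 2*(σ^2*σ^2))/(4*σ^2) := by field_simp; ring
    rw [heq, le_div_iff₀ h4]
    linarith
  have h3 : ∫ ω, (f ω ^ 4 / (4 * σ^2) + g ω ^ 4 / (4 * σ^2) + σ^2/2) ∂μ ≤ σ^2 := by
    rw [integral_add hb (integrable_const _),
        integral_add ((int_p4 hf4).div_const _) ((int_p4 hg4).div_const _),
        integral_div, integral_div, integral_const]
    simp only [probReal_univ, measure_univ, ENNReal.toReal_one, smul_eq_mul, one_mul]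
    have b1 : (∫ ω, f ω ^4 ∂μ) / (4*σ^2) ≤ σ^4 / (4*σ^2) := by gcongr
    have b2 : (∫ ω, g ω ^4 ∂μ) / (4*σ^2) ≤ σ^4 / (4*σ^2) := by gcongr
    have heq : σ^4/(4*σ^2) = σ^2/4 := by
      field_simp
    linarith
  linarith

lemma outerE_model {a b q : ℕ} (A : Matrix (Fin q) (Fin a) ℝ) (B : Matrix (Fin q) (Fin b) ℝ)
    (x : Ω → Fin a → ℝ) (z : Ω → Fin b → ℝ) (e1 e2 : Ω → Fin q → ℝ)
    (hx : ∀ j, MemLp (fun ω => x ω j) 2 μ) (hz : ∀ j, MemLp (fun ω => z ω j) 2 μ)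
    (he1 : ∀ i, MemLp (fun ω => e1 ω i) 2 μ) (he2 : ∀ i, MemLp (fun ω => e2 ω i) 2 μ)
    (hxe : outerE μ x e2 = 0) (hze : outerE μ z e1 = 0) (hee : outerE μ e1 e2 = 0) :
    outerE μ (fun ω => A.mulVec (x ω) + e1 ω) (fun ω => B.mulVec (z ω) + e2 ω)
      = A * outerE μ x z * Bᵀ := by
  ext i j
  have expand : ∀ ω, (A.mulVec (x ω) + e1 ω) i * (B.mulVec (z ω) + e2 ω) j =
      (∑ a' : Fin a, ∑ b' : Fin b, (A i a' * B j b') * (x ω a' * z ω b'))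
      + (∑ a' : Fin a, A i a' * (x ω a' * e2 ω j))
      + ((∑ b' : Fin b, B j b' * (z ω b' * e1 ω i))
      + e1 ω i * e2 ω j) := by
    intro ω
    simp only [Pi.add_apply, Matrix.mulVec, dotProduct]
    rw [add_mul, mul_add, mul_add]
    have h1 : (∑ a', A i a' * x ω a') * (∑ b', B j b' * z ω b')
        = ∑ a' : Fin a, ∑ b' : Fin b, (A i a' * B j b') * (x ω a' * z ω b') := by
      rw [Finset.sum_mul_sum]
      exact Finset.sum_congr rfl fun a' _ => Finset.sum_congr rfl fun b' _ => by ring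
    have h2 : (∑ a', A i a' * x ω a') * e2 ω j
        = ∑ a' : Fin a, A i a' * (x ω a' * e2 ω j) := by
      rw [Finset.sum_mul]
      exact Finset.sum_congr rfl fun a' _ => by ring
    have h3 : e1 ω i * (∑ b', B j b' * z ω b')
        = ∑ b' : Fin b, B j b' * (z ω b' * e1 ω i) := by
      rw [Finset.mul_sum]
      exact Finset.sum_congr rfl fun b' _ => by ring
    rw [h1, h2, h3]
  have int1 : Integrable (fun ω =>
      ∑ a' : Fin a, ∑ b' : Fin b, (A i a' * B j b') * (x ω a' * z ω b')) μ :=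
    integrable_finset_sum _ fun a' _ => integrable_finset_sum _ fun b' _ =>
      (int_mul (hx a') (hz b')).const_mul _
  have int2 : Integrable (fun ω => ∑ a' : Fin a, A i a' * (x ω a' * e2 ω j)) μ :=
    integrable_finset_sum _ fun a' _ => (int_mul (hx a') (he2 j)).const_mul _
  have int3 : Integrable (fun ω => ∑ b' : Fin b, B j b' * (z ω b' * e1 ω i)) μ :=
    integrable_finset_sum _ fun b' _ => (int_mul (hz b') (he1 i)).const_mul _
  have int4 : Integrable (fun ω => e1 ω i * e2 ω j) μ := int_mul (he1 i) (he2 j)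
  have int12 : Integrable (fun ω =>
      (∑ a' : Fin a, ∑ b' : Fin b, (A i a' * B j b') * (x ω a' * z ω b'))
      + ∑ a' : Fin a, A i a' * (x ω a' * e2 ω j)) μ := int1.add int2
  have int34 : Integrable (fun ω =>
      (∑ b' : Fin b, B j b' * (z ω b' * e1 ω i)) + e1 ω i * e2 ω j) μ := int3.add int4
  show ∫ ω, (A.mulVec (x ω) + e1 ω) i * (B.mulVec (z ω) + e2 ω) j ∂μ = _
  rw [integral_congr_ae (Filter.Eventually.of_forall expand)]
  rw [integral_add int12 int34, integral_add int1 int2, integral_add int3 int4]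
  have e2z : ∫ ω, (∑ a' : Fin a, A i a' * (x ω a' * e2 ω j)) ∂μ = 0 := by
    rw [integral_finset_sum _ fun a' _ => (int_mul (hx a') (he2 j)).const_mul _]
    refine Finset.sum_eq_zero fun a' _ => ?_
    rw [integral_const_mul]
    have h0 : (outerE μ x e2) a' j = (0 : Matrix (Fin a) (Fin q) ℝ) a' j := by rw [hxe]
    simp only [outerE, Matrix.of_apply, Matrix.zero_apply] at h0
    rw [h0, mul_zero]
  have e1z : ∫ ω, (∑ b' : Fin b, B j b' * (z ω b' * e1 ω i)) ∂μ = 0 := by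
    rw [integral_finset_sum _ fun b' _ => (int_mul (hz b') (he1 i)).const_mul _]
    refine Finset.sum_eq_zero fun b' _ => ?_
    rw [integral_const_mul]
    have h0 : (outerE μ z e1) b' i = (0 : Matrix (Fin b) (Fin q) ℝ) b' i := by rw [hze]
    simp only [outerE, Matrix.of_apply, Matrix.zero_apply] at h0
    rw [h0, mul_zero]
  have eez : ∫ ω, e1 ω i * e2 ω j ∂μ = 0 := by
    have h0 : (outerE μ e1 e2) i j = (0 : Matrix (Fin q) (Fin q) ℝ) i j := by rw [hee]
    simpa [outerE] using h0
  rw [e2z, e1z, eez]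
  have main : ∫ ω, (∑ a' : Fin a, ∑ b' : Fin b, (A i a' * B j b') * (x ω a' * z ω b')) ∂μ
      = ∑ a' : Fin a, ∑ b' : Fin b, (A i a' * B j b') * ∫ ω, x ω a' * z ω b' ∂μ := by
    rw [integral_finset_sum _ fun a' _ => integrable_finset_sum _ fun b' _ =>
      (int_mul (hx a') (hz b')).const_mul _]
    refine Finset.sum_congr rfl fun a' _ => ?_
    rw [integral_finset_sum _ fun b' _ => (int_mul (hx a') (hz b')).const_mul _]
    exact Finset.sum_congr rfl fun b' _ => integral_const_mul _ _
  rw [main]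
  simp only [Matrix.mul_apply, Matrix.transpose_apply, outerE, Matrix.of_apply,
    Finset.sum_mul, add_zero]
  rw [Finset.sum_comm]
  exact Finset.sum_congr rfl fun b' _ => Finset.sum_congr rfl fun a' _ => by ring

/-- The key per-term bound. -/
lemma spec_term_le [IsProbabilityMeasure μ] {P ka kb : ℕ}
    (A : Matrix (Fin P) (Fin ka) ℝ) (B : Matrix (Fin P) (Fin kb) ℝ)
    (x : Ω → Fin ka → ℝ) (z : Ω → Fin kb → ℝ) (e1 e2 : Ω → Fin P → ℝ)
    (hx : ∀ j, MemLp (fun ω => x ω j) 4 μ) (hz : ∀ j, MemLp (fun ω => z ω j) 4 μ)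
    (he1 : ∀ i, MemLp (fun ω => e1 ω i) 2 μ) (he2 : ∀ i, MemLp (fun ω => e2 ω i) 2 μ)
    (hxe : outerE μ x e2 = 0) (hze : outerE μ z e1 = 0) (hee : outerE μ e1 e2 = 0)
    {σ : ℝ} (hσ : 0 < σ)
    (hmx : ∀ j, ∫ ω, x ω j ^ 4 ∂μ ≤ σ^4) (hmz : ∀ j, ∫ ω, z ω j ^ 4 ∂μ ≤ σ^4)
    (km : ℕ) (hka : ka ≤ km) (hkb : kb ≤ km)
    {cA cB : ℝ} (hA : spec A ≤ cA) (hB : spec B ≤ cB) (hcA : 0 ≤ cA) (hcB : 0 ≤ cB) :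
    spec (outerE μ (fun ω => A.mulVec (x ω) + e1 ω) (fun ω => B.mulVec (z ω) + e2 ω))
      ≤ cA * cB * km * σ^2 := by
  rw [outerE_model A B x z e1 e2 (fun j => memL2_of_L4 (hx j)) (fun j => memL2_of_L4 (hz j))
    he1 he2 hxe hze hee]
  have hM : spec (outerE μ x z) ≤ (km : ℝ) * σ^2 := by
    have hent : ∀ i j, |(outerE μ x z) i j| ≤ σ^2 := fun i j =>
      abs_integral_mul_le (hx i) (hz j) hσ (hmx i) (hmz j)
    have h1 := spec_le_of_entries (outerE μ x z) (σ^2) (by positivity) hent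
    have h2 : Real.sqrt (ka * kb) ≤ (km : ℝ) := by
      rw [show ((km:ℝ)) = Real.sqrt ((km:ℝ)^2) from (Real.sqrt_sq (by positivity)).symm]
      apply Real.sqrt_le_sqrt
      have : (ka : ℝ) ≤ km := by exact_mod_cast hka
      have : (kb : ℝ) ≤ km := by exact_mod_cast hkb
      nlinarith [Nat.cast_nonneg (α := ℝ) ka, Nat.cast_nonneg (α := ℝ) kb]
    calc spec (outerE μ x z) ≤ Real.sqrt (ka * kb) * σ^2 := h1
      _ ≤ (km : ℝ) * σ^2 := mul_le_mul_of_nonneg_right h2 (by positivity)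
  calc spec (A * outerE μ x z * Bᵀ) ≤ spec (A * outerE μ x z) * spec Bᵀ := spec_mul_le _ _
    _ = spec (A * outerE μ x z) * spec B := by rw [spec_transpose]
    _ ≤ (spec A * spec (outerE μ x z)) * spec B :=
        mul_le_mul_of_nonneg_right (spec_mul_le _ _) (spec_nonneg _)
    _ ≤ (cA * ((km:ℝ) * σ^2)) * cB := by
        apply mul_le_mul _ hB (spec_nonneg _) (by positivity)
        exact mul_le_mul hA hM (spec_nonneg _) hcA
    _ = cA * cB * km * σ^2 := by ring

end IntLemmas

lemma spec_smul_sum_le {P : ℕ} (n : ℕ) (M : ℕ → Matrix (Fin P) (Fin P) ℝ)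
    (s : Finset ℕ) (f : ℕ → ℝ) (hf : ∀ t ∈ s, spec (M t) ≤ f t) :
    spec ((n : ℝ)⁻¹ • ∑ t ∈ s, M t) ≤ (n : ℝ)⁻¹ * ∑ t ∈ s, f t := by
  rw [spec_smul, abs_of_nonneg (by positivity : (0:ℝ) ≤ (n:ℝ)⁻¹)]
  exact mul_le_mul_of_nonneg_left ((spec_sum_le s M).trans (Finset.sum_le_sum hf))
    (by positivity)

lemma sum_ite_bound (a b r0 h : ℕ) (C1 C12 C2 : ℝ)
    (hC1 : 0 ≤ C1) (hC12 : 0 ≤ C12) (hC2 : 0 ≤ C2) :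
    ∑ t ∈ Finset.Icc a b, (if t + h ≤ r0 then C1 else if t ≤ r0 then C12 else C2)
      ≤ ((Finset.Icc a (r0 - h)).card : ℝ) * C1
        + ((Finset.Icc (r0 + 1 - h) r0).card : ℝ) * C12
        + ((Finset.Icc (r0 + 1) b).card : ℝ) * C2 := by
  classical
  set s := Finset.Icc a b
  set P1 : ℕ → Prop := fun t => t + h ≤ r0 with hP1
  set P2 : ℕ → Prop := fun t => t ≤ r0 with hP2
  have hsplit : ∑ t ∈ s, (if t + h ≤ r0 then C1 else if t ≤ r0 then C12 else C2)
      = ∑ t ∈ s.filter P1, C1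
        + (∑ t ∈ (s.filter fun t => ¬ P1 t).filter P2, C12
        + ∑ t ∈ ((s.filter fun t => ¬ P1 t).filter fun t => ¬ P2 t), C2) := by
    rw [← Finset.sum_filter_add_sum_filter_not s P1]
    congr 1
    · exact Finset.sum_congr rfl fun t ht => if_pos (Finset.mem_filter.mp ht).2
    · rw [← Finset.sum_filter_add_sum_filter_not (s.filter fun t => ¬ P1 t) P2]
      congr 1
      · refine Finset.sum_congr rfl fun t ht => ?_
        have h1 := (Finset.mem_filter.mp (Finset.mem_of_mem_filter t ht)).2
        have h2 := (Finset.mem_filter.mp ht).2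
        rw [if_neg h1, if_pos h2]
      · refine Finset.sum_congr rfl fun t ht => ?_
        have h1 := (Finset.mem_filter.mp (Finset.mem_of_mem_filter t ht)).2
        have h2 := (Finset.mem_filter.mp ht).2
        rw [if_neg h1, if_neg h2]
  rw [hsplit]
  have c1 : (s.filter P1).card ≤ (Finset.Icc a (r0 - h)).card := by
    apply Finset.card_le_card
    intro t ht
    have h1 := Finset.mem_Icc.mp (Finset.mem_of_mem_filter t ht)
    have h2 := (Finset.mem_filter.mp ht).2
    simp only [hP1] at h2
    exact Finset.mem_Icc.mpr (by omega)
  have c2 : ((s.filter fun t => ¬ P1 t).filter P2).card ≤ (Finset.Icc (r0 + 1 - h) r0).card := by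
    apply Finset.card_le_card
    intro t ht
    have h1 := (Finset.mem_filter.mp (Finset.mem_of_mem_filter t ht)).2
    have h2 := (Finset.mem_filter.mp ht).2
    simp only [hP1] at h1
    simp only [hP2] at h2
    exact Finset.mem_Icc.mpr (by omega)
  have c3 : (((s.filter fun t => ¬ P1 t).filter fun t => ¬ P2 t)).card
      ≤ (Finset.Icc (r0 + 1) b).card := by
    apply Finset.card_le_card
    intro t ht
    have h0 := Finset.mem_Icc.mp (Finset.mem_of_mem_filter t (Finset.mem_of_mem_filter t ht))
    have h2 := (Finset.mem_filter.mp ht).2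
    simp only [hP2] at h2
    exact Finset.mem_Icc.mpr (by omega)
  simp only [Finset.sum_const, nsmul_eq_mul]
  have : ∀ (u v : ℕ), u ≤ v → ∀ C : ℝ, 0 ≤ C → (u:ℝ) * C ≤ (v:ℝ) * C := by
    intro u v huv C hC
    apply mul_le_mul_of_nonneg_right _ hC
    exact_mod_cast huv
  have t1 := this _ _ c1 C1 hC1
  have t2 := this _ _ c2 C12 hC12
  have t3 := this _ _ c3 C2 hC2
  linarith
/-- In the change-point factor model with white-noise orthogonality,
4th-moment bounds and loading norm bounds: for integer `h ≥ 1` and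
`ε ∈ (−γ0, 1−γ0)` with `εn ∈ ℤ` and `|ε| > (h+1)/n`, the spectral norms of
`Σ_{y,1}(h,γ0+ε)` and `Σ_{y,2}(h,γ0+ε)` satisfy the stated bounds, for `ε < 0`
and for `ε > 0` respectively. -/
theorem stmt10 {Ω : Type} [MeasurableSpace Ω] (μ : Measure Ω) [IsProbabilityMeasure μ]
    {p k1 k2 n r0 : ℕ} (hp : 0 < p) (hn : 0 < n) (hr0 : 1 ≤ r0) (hr0n : r0 ≤ n)
    (A1 : Matrix (Fin p) (Fin k1) ℝ) (A2 : Matrix (Fin p) (Fin k2) ℝ)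
    (x1 : ℕ → Ω → Fin k1 → ℝ) (x2 : ℕ → Ω → Fin k2 → ℝ)
    (e : ℕ → Ω → Fin p → ℝ) (y : ℕ → Ω → Fin p → ℝ)
    (hL4x1 : ∀ t j, MemLp (fun ω => x1 t ω j) 4 μ)
    (hL4x2 : ∀ t j, MemLp (fun ω => x2 t ω j) 4 μ)
    (hL2e : ∀ t i, MemLp (fun ω => e t ω i) 2 μ)
    (hmodel1 : ∀ t, 1 ≤ t → t ≤ r0 → ∀ ω, y t ω = A1.mulVec (x1 t ω) + e t ω)
    (hmodel2 : ∀ t, r0 < t → t ≤ n → ∀ ω, y t ω = A2.mulVec (x2 t ω) + e t ω)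
    (hee : ∀ s t, s ≠ t → outerE μ (e s) (e t) = 0)
    (hx1e : ∀ t s, outerE μ (x1 t) (e s) = 0)
    (hx2e : ∀ t s, outerE μ (x2 t) (e s) = 0)
    (σx : ℝ) (hσx : 0 < σx)
    (hmom1 : ∀ t j, ∫ ω, (x1 t ω j) ^ 4 ∂μ ≤ σx ^ 4)
    (hmom2 : ∀ t j, ∫ ω, (x2 t ω j) ^ 4 ∂μ ≤ σx ^ 4)
    (a1 δ1 δ2 : ℝ) (ha1 : 0 < a1) (hδ1 : δ1 ∈ Set.Icc (0:ℝ) 1) (hδ2 : δ2 ∈ Set.Icc (0:ℝ) 1)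
    (hA1 : spec A1 ≤ a1 * (p : ℝ) ^ ((1 - δ1) / 2))
    (hA2 : spec A2 ≤ a1 * (p : ℝ) ^ ((1 - δ2) / 2))
    (h : ℕ) (hh : 1 ≤ h) (ε : ℝ)
    (hεlb : -((r0 : ℝ) / n) < ε) (hεub : ε < 1 - (r0 : ℝ) / n)
    (hεint : ∃ m : ℤ, ε * n = m) (hεabs : ((h : ℝ) + 1) / n < |ε|) :
    (ε < 0 →
      spec (SigY1 μ y n h ⌊((r0 : ℝ) / n + ε) * n⌋₊) ≤
        ((r0 : ℝ) / n) * a1 ^ 2 * (max k1 k2 : ℕ) * σx ^ 2 * (p : ℝ) ^ (1 - δ1) ∧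
      spec (SigY2 μ y n h ⌊((r0 : ℝ) / n + ε) * n⌋₊) ≤
        a1 ^ 2 * (max k1 k2 : ℕ) * σx ^ 2 *
          (-ε * (p : ℝ) ^ (1 - δ1) + ((h : ℝ) / n) * (p : ℝ) ^ (1 - δ1 / 2 - δ2 / 2) +
            (1 - (r0 : ℝ) / n) * (p : ℝ) ^ (1 - δ2))) ∧
    (0 < ε →
      spec (SigY1 μ y n h ⌊((r0 : ℝ) / n + ε) * n⌋₊) ≤
        a1 ^ 2 * (max k1 k2 : ℕ) * σx ^ 2 *
          (((r0 : ℝ) / n) * (p : ℝ) ^ (1 - δ1) + ((h : ℝ) / n) * (p : ℝ) ^ (1 - δ1 / 2 - δ2 / 2) +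
            ε * (p : ℝ) ^ (1 - δ2)) ∧
      spec (SigY2 μ y n h ⌊((r0 : ℝ) / n + ε) * n⌋₊) ≤
        (1 - (r0 : ℝ) / n) * a1 ^ 2 * (max k1 k2 : ℕ) * σx ^ 2 * (p : ℝ) ^ (1 - δ2)) := by
  obtain ⟨m, hm⟩ := hεint
  have hn0 : (0:ℝ) < n := by exact_mod_cast hn
  have hnne : (n:ℝ) ≠ 0 := ne_of_gt hn0
  have hp0 : (0:ℝ) < (p:ℝ) := by exact_mod_cast hp
  have hk1 : k1 ≤ max k1 k2 := le_max_left _ _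
  have hk2 : k2 ≤ max k1 k2 := le_max_right _ _
  have hrp : ∀ u v : ℝ, (p:ℝ)^u * (p:ℝ)^v = (p:ℝ)^(u+v) :=
    fun u v => (Real.rpow_add hp0 u v).symm
  have hX11 : (p:ℝ)^((1-δ1)/2) * (p:ℝ)^((1-δ1)/2) = (p:ℝ)^(1-δ1) := by
    rw [hrp]; congr 1; ring
  have hX12 : (p:ℝ)^((1-δ1)/2) * (p:ℝ)^((1-δ2)/2) = (p:ℝ)^(1-δ1/2-δ2/2) := by
    rw [hrp]; congr 1; ring
  have hX22 : (p:ℝ)^((1-δ2)/2) * (p:ℝ)^((1-δ2)/2) = (p:ℝ)^(1-δ2) := by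
    rw [hrp]; congr 1; ring
  set D11 : ℝ := a1^2 * (max k1 k2 : ℕ) * σx^2 * (p:ℝ)^(1-δ1) with hD11def
  set D12 : ℝ := a1^2 * (max k1 k2 : ℕ) * σx^2 * (p:ℝ)^(1-δ1/2-δ2/2) with hD12def
  set D22 : ℝ := a1^2 * (max k1 k2 : ℕ) * σx^2 * (p:ℝ)^(1-δ2) with hD22def
  have hD11 : 0 ≤ D11 := by rw [hD11def]; positivity
  have hD12 : 0 ≤ D12 := by rw [hD12def]; positivity
  have hD22 : 0 ≤ D22 := by rw [hD22def]; positivity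
  have cAnn : 0 ≤ a1 * (p:ℝ)^((1-δ1)/2) := by positivity
  have cBnn : 0 ≤ a1 * (p:ℝ)^((1-δ2)/2) := by positivity
  have B11 : ∀ t, 1 ≤ t → t + h ≤ r0 → spec (outerE μ (y t) (y (t+h))) ≤ D11 := by
    intro t h1 h2
    rw [funext (hmodel1 t h1 (by omega)), funext (hmodel1 (t+h) (by omega) h2)]
    refine le_trans (spec_term_le A1 A1 (x1 t) (x1 (t+h)) (e t) (e (t+h))
      (hL4x1 t) (hL4x1 (t+h)) (hL2e t) (hL2e (t+h))
      (hx1e t (t+h)) (hx1e (t+h) t) (hee t (t+h) (by omega)) hσx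
      (hmom1 t) (hmom1 (t+h)) (max k1 k2) hk1 hk1 hA1 hA1 cAnn cAnn) (le_of_eq ?_)
    rw [hD11def, ← hX11]; ring
  have B12 : ∀ t, 1 ≤ t → t ≤ r0 → r0 < t + h → t + h ≤ n →
      spec (outerE μ (y t) (y (t+h))) ≤ D12 := by
    intro t h1 h2 h3 h4
    rw [funext (hmodel1 t h1 h2), funext (hmodel2 (t+h) h3 h4)]
    refine le_trans (spec_term_le A1 A2 (x1 t) (x2 (t+h)) (e t) (e (t+h))
      (hL4x1 t) (hL4x2 (t+h)) (hL2e t) (hL2e (t+h))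
      (hx1e t (t+h)) (hx2e (t+h) t) (hee t (t+h) (by omega)) hσx
      (hmom1 t) (hmom2 (t+h)) (max k1 k2) hk1 hk2 hA1 hA2 cAnn cBnn) (le_of_eq ?_)
    rw [hD12def, ← hX12]; ring
  have B22 : ∀ t, r0 < t → t + h ≤ n → spec (outerE μ (y t) (y (t+h))) ≤ D22 := by
    intro t h1 h2
    rw [funext (hmodel2 t h1 (by omega)), funext (hmodel2 (t+h) (by omega) h2)]
    refine le_trans (spec_term_le A2 A2 (x2 t) (x2 (t+h)) (e t) (e (t+h))
      (hL4x2 t) (hL4x2 (t+h)) (hL2e t) (hL2e (t+h))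
      (hx2e t (t+h)) (hx2e (t+h) t) (hee t (t+h) (by omega)) hσx
      (hmom2 t) (hmom2 (t+h)) (max k1 k2) hk2 hk2 hA2 hA2 cBnn cBnn) (le_of_eq ?_)
    rw [hD22def, ← hX22]; ring
  constructor
  · -- ε < 0
    intro hεneg
    have hmneg : m < 0 := by
      have hx : (m:ℝ) < 0 := by rw [← hm]; exact mul_neg_of_neg_of_pos hεneg hn0
      exact_mod_cast hx
    have hmlb : -(r0:ℤ) < m := by
      have h1 : -((r0:ℝ)) < (m:ℝ) := by
        rw [← hm]
        calc -(r0:ℝ) = (-((r0:ℝ)/n)) * n := by field_simp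
          _ < ε * n := mul_lt_mul_of_pos_right hεlb hn0
      exact_mod_cast h1
    set mm : ℕ := (-m).toNat with hmmdef
    have hmmz : (mm:ℤ) = -m := Int.toNat_of_nonneg (by omega)
    have hmmR : (mm:ℝ) = -(m:ℝ) := by exact_mod_cast hmmz
    have hmmlt : mm < r0 := by omega
    have hmmh : h + 2 ≤ mm := by
      have h1 : (h:ℝ) + 1 < mm := by
        rw [hmmR, ← hm]
        calc (h:ℝ) + 1 = (((h:ℝ)+1)/n) * n := by field_simp
          _ < |ε| * n := mul_lt_mul_of_pos_right hεabs hn0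
          _ = -(ε * n) := by rw [abs_of_neg hεneg]; ring
      have h2 : h + 1 < mm := by exact_mod_cast h1
      omega
    set R : ℕ := r0 - mm with hRdef
    have hfloor : ⌊((r0:ℝ)/n + ε) * n⌋₊ = R := by
      have hval : ((r0:ℝ)/n + ε) * n = (R:ℝ) := by
        rw [add_mul, div_mul_cancel₀ _ hnne, hm, hRdef, Nat.cast_sub hmmlt.le, hmmR]
        ring
      rw [hval, Nat.floor_natCast]
    rw [hfloor]
    constructor
    · -- SigY1, ε < 0
      simp only [SigY1]
      have hf : ∀ t ∈ Finset.Icc 1 (R - h), spec (outerE μ (y t) (y (t+h))) ≤ D11 := by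
        intro t ht
        rw [Finset.mem_Icc] at ht
        exact B11 t ht.1 (by omega)
      refine le_trans (spec_smul_sum_le n _ _ _ hf) ?_
      rw [Finset.sum_const, Nat.card_Icc, nsmul_eq_mul]
      have hcard : ((R - h + 1 - 1 : ℕ):ℝ) ≤ (r0:ℝ) := by
        exact_mod_cast (by omega : R - h + 1 - 1 ≤ r0)
      calc (n:ℝ)⁻¹ * (((R-h+1-1:ℕ):ℝ) * D11) ≤ (n:ℝ)⁻¹ * ((r0:ℝ) * D11) := by
            apply mul_le_mul_of_nonneg_left (mul_le_mul_of_nonneg_right hcard hD11)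
              (by positivity)
        _ = ((r0:ℝ)/n) * a1^2 * (max k1 k2 : ℕ) * σx^2 * (p:ℝ)^(1-δ1) := by
            rw [hD11def]; field_simp
    · -- SigY2, ε < 0
      simp only [SigY2]
      have hf : ∀ t ∈ Finset.Icc (R+1) (n-h), spec (outerE μ (y t) (y (t+h))) ≤
          (if t + h ≤ r0 then D11 else if t ≤ r0 then D12 else D22) := by
        intro t ht
        rw [Finset.mem_Icc] at ht
        split_ifs with h1 h2
        · exact B11 t (by omega) h1
        · exact B12 t (by omega) h2 (by omega) (by omega)
        · exact B22 t (by omega) (by omega)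
      refine le_trans (spec_smul_sum_le n _ _ _ hf) ?_
      refine le_trans (mul_le_mul_of_nonneg_left
        (sum_ite_bound (R+1) (n-h) r0 h D11 D12 D22 hD11 hD12 hD22)
        (by positivity : (0:ℝ) ≤ (n:ℝ)⁻¹)) ?_
      have b1 : ((Finset.Icc (R+1) (r0-h)).card : ℝ) ≤ (mm:ℝ) := by
        rw [Nat.card_Icc]; exact_mod_cast (by omega : r0 - h + 1 - (R+1) ≤ mm)
      have b2 : ((Finset.Icc (r0+1-h) r0).card : ℝ) ≤ (h:ℝ) := by
        rw [Nat.card_Icc]; exact_mod_cast (by omega : r0 + 1 - (r0+1-h) ≤ h)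
      have b3 : ((Finset.Icc (r0+1) (n-h)).card : ℝ) ≤ ((n:ℝ) - r0) := by
        rw [Nat.card_Icc, ← Nat.cast_sub hr0n]
        exact_mod_cast (by omega : n - h + 1 - (r0+1) ≤ n - r0)
      calc (n:ℝ)⁻¹ * (((Finset.Icc (R+1) (r0-h)).card : ℝ) * D11
            + ((Finset.Icc (r0+1-h) r0).card : ℝ) * D12
            + ((Finset.Icc (r0+1) (n-h)).card : ℝ) * D22)
          ≤ (n:ℝ)⁻¹ * ((mm:ℝ) * D11 + (h:ℝ) * D12 + ((n:ℝ) - r0) * D22) := by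
            apply mul_le_mul_of_nonneg_left _ (by positivity)
            apply add_le_add (add_le_add (mul_le_mul_of_nonneg_right b1 hD11)
              (mul_le_mul_of_nonneg_right b2 hD12)) (mul_le_mul_of_nonneg_right b3 hD22)
        _ = a1^2 * (max k1 k2 : ℕ) * σx^2 *
            (-ε * (p:ℝ)^(1-δ1) + ((h:ℝ)/n) * (p:ℝ)^(1-δ1/2-δ2/2)
              + (1 - (r0:ℝ)/n) * (p:ℝ)^(1-δ2)) := by
            rw [hmmR, ← hm, hD11def, hD12def, hD22def]; field_simp
  · -- ε > 0
    intro hεpos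
    have hmpos : 0 < m := by
      have hx : (0:ℝ) < (m:ℝ) := by rw [← hm]; exact mul_pos hεpos hn0
      exact_mod_cast hx
    have hmub : m < (n:ℤ) - r0 := by
      have h1 : (m:ℝ) < (n:ℝ) - r0 := by
        rw [← hm]
        calc ε * n < (1 - (r0:ℝ)/n) * n := mul_lt_mul_of_pos_right hεub hn0
          _ = (n:ℝ) - r0 := by field_simp
      exact_mod_cast h1
    set mm : ℕ := m.toNat with hmmdef
    have hmmz : (mm:ℤ) = m := Int.toNat_of_nonneg (by omega)
    have hmmR : (mm:ℝ) = (m:ℝ) := by exact_mod_cast hmmz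
    have hmmlt : r0 + mm < n := by omega
    have hmmh : h + 2 ≤ mm := by
      have h1 : (h:ℝ) + 1 < mm := by
        rw [hmmR, ← hm]
        calc (h:ℝ) + 1 = (((h:ℝ)+1)/n) * n := by field_simp
          _ < |ε| * n := mul_lt_mul_of_pos_right hεabs hn0
          _ = ε * n := by rw [abs_of_pos hεpos]
      have h2 : h + 1 < mm := by exact_mod_cast h1
      omega
    set R : ℕ := r0 + mm with hRdef
    have hfloor : ⌊((r0:ℝ)/n + ε) * n⌋₊ = R := by
      have hval : ((r0:ℝ)/n + ε) * n = (R:ℝ) := by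
        rw [add_mul, div_mul_cancel₀ _ hnne, hm, hRdef, Nat.cast_add, hmmR]
      rw [hval, Nat.floor_natCast]
    rw [hfloor]
    constructor
    · -- SigY1, ε > 0
      simp only [SigY1]
      have hf : ∀ t ∈ Finset.Icc 1 (R - h), spec (outerE μ (y t) (y (t+h))) ≤
          (if t + h ≤ r0 then D11 else if t ≤ r0 then D12 else D22) := by
        intro t ht
        rw [Finset.mem_Icc] at ht
        split_ifs with h1 h2
        · exact B11 t (by omega) h1
        · exact B12 t (by omega) h2 (by omega) (by omega)
        · exact B22 t (by omega) (by omega)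
      refine le_trans (spec_smul_sum_le n _ _ _ hf) ?_
      refine le_trans (mul_le_mul_of_nonneg_left
        (sum_ite_bound 1 (R-h) r0 h D11 D12 D22 hD11 hD12 hD22)
        (by positivity : (0:ℝ) ≤ (n:ℝ)⁻¹)) ?_
      have b1 : ((Finset.Icc 1 (r0-h)).card : ℝ) ≤ (r0:ℝ) := by
        rw [Nat.card_Icc]; exact_mod_cast (by omega : r0 - h + 1 - 1 ≤ r0)
      have b2 : ((Finset.Icc (r0+1-h) r0).card : ℝ) ≤ (h:ℝ) := by
        rw [Nat.card_Icc]; exact_mod_cast (by omega : r0 + 1 - (r0+1-h) ≤ h)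
      have b3 : ((Finset.Icc (r0+1) (R-h)).card : ℝ) ≤ (mm:ℝ) := by
        rw [Nat.card_Icc]; exact_mod_cast (by omega : R - h + 1 - (r0+1) ≤ mm)
      calc (n:ℝ)⁻¹ * (((Finset.Icc 1 (r0-h)).card : ℝ) * D11
            + ((Finset.Icc (r0+1-h) r0).card : ℝ) * D12
            + ((Finset.Icc (r0+1) (R-h)).card : ℝ) * D22)
          ≤ (n:ℝ)⁻¹ * ((r0:ℝ) * D11 + (h:ℝ) * D12 + (mm:ℝ) * D22) := by
            apply mul_le_mul_of_nonneg_left _ (by positivity)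
            apply add_le_add (add_le_add (mul_le_mul_of_nonneg_right b1 hD11)
              (mul_le_mul_of_nonneg_right b2 hD12)) (mul_le_mul_of_nonneg_right b3 hD22)
        _ = a1^2 * (max k1 k2 : ℕ) * σx^2 *
            (((r0:ℝ)/n) * (p:ℝ)^(1-δ1) + ((h:ℝ)/n) * (p:ℝ)^(1-δ1/2-δ2/2)
              + ε * (p:ℝ)^(1-δ2)) := by
            rw [hmmR, ← hm, hD11def, hD12def, hD22def]; field_simp
    · -- SigY2, ε > 0
      simp only [SigY2]
      have hf : ∀ t ∈ Finset.Icc (R+1) (n-h), spec (outerE μ (y t) (y (t+h))) ≤ D22 := by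
        intro t ht
        rw [Finset.mem_Icc] at ht
        exact B22 t (by omega) (by omega)
      refine le_trans (spec_smul_sum_le n _ _ _ hf) ?_
      rw [Finset.sum_const, Nat.card_Icc, nsmul_eq_mul]
      have hcard : ((n - h + 1 - (R+1) : ℕ):ℝ) ≤ ((n:ℝ) - r0) := by
        rw [← Nat.cast_sub hr0n]
        exact_mod_cast (by omega : n - h + 1 - (R+1) ≤ n - r0)
      calc (n:ℝ)⁻¹ * (((n - h + 1 - (R+1) : ℕ):ℝ) * D22)
          ≤ (n:ℝ)⁻¹ * (((n:ℝ) - r0) * D22) := by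
            apply mul_le_mul_of_nonneg_left (mul_le_mul_of_nonneg_right hcard hD22)
              (by positivity)
        _ = (1 - (r0:ℝ)/n) * a1^2 * (max k1 k2 : ℕ) * σx^2 * (p:ℝ)^(1-δ2) := by
            rw [hD22def]; field_simp
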